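/- (Relative smoothness sublinear rate.) Suppose f is smooth relative to an essentially smooth convex h with constant L (i.e. L·h − f is convex on the interior of X) and the NoLips/Bregman proximal gradient method is run with step size γ = (1+ν)/(2L), where ν ∈ [0,1] is the symmetry coefficient of h, ν = inf_{x≠u} D_h(x,u)/D_h(u,x). Then for any reference point u in dom h and all N ≥ 1: Ψ(x^N) − Ψ(u) ≤ 2L·D_h(u, x⁰) / (N(1+ν)). -/

import Mathlib

open RealInnerProductSpace

lemma aux_line_hasDerivAt {E : Type*} [NormedAddCommGroup E] [InnerProductSpace ℝ E]
    [CompleteSpace E] {φ : E → ℝ} {g z : E} (hφ : HasGradientAt φ g z) (d : E) :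
    HasDerivAt (fun t : ℝ => φ (z + t • d)) ⟪g, d⟫ 0 := by
  have h1 : HasDerivAt (fun t : ℝ => z + t • d) d 0 := by
    simpa using ((hasDerivAt_id (0:ℝ)).smul_const d).const_add z
  have h3 : HasFDerivAt φ (InnerProductSpace.toDual ℝ E g) ((fun t : ℝ => z + t • d) 0) := by
    simpa using hφ.hasFDerivAt
  have := h3.comp_hasDerivAt 0 h1
  simp only [InnerProductSpace.toDual_apply_apply] at this
  exact this

lemma aux_deriv_le {ψ : ℝ → ℝ} {c' c : ℝ} (hd : HasDerivAt ψ c' 0)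
    (hq : ∀ t : ℝ, t ∈ Set.Ioo (0:ℝ) 1 → ψ t - ψ 0 ≤ t * c) : c' ≤ c := by
  have h1 : Filter.Tendsto (slope ψ 0) (nhdsWithin 0 (Set.Ioi 0)) (nhds c') :=
    (hasDerivAt_iff_tendsto_slope.mp hd).mono_left
      (nhdsWithin_mono _ (fun t ht => ne_of_gt ht))
  refine le_of_tendsto h1 ?_
  filter_upwards [Ioo_mem_nhdsGT_of_mem (by norm_num : (0:ℝ) ∈ Set.Ico 0 1)] with t ht
  rw [slope_def_field, div_le_iff₀ (by simpa using ht.1)]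
  have := hq t ht
  nlinarith [ht.1]

lemma aux_deriv_ge {ψ : ℝ → ℝ} {c' c : ℝ} (hd : HasDerivAt ψ c' 0)
    (hq : ∀ t : ℝ, t ∈ Set.Ioo (0:ℝ) 1 → t * c ≤ ψ t - ψ 0) : c ≤ c' := by
  have := aux_deriv_le (ψ := fun t => -ψ t) (c := -c) hd.neg (fun t ht => by
    have := hq t ht; linarith)
  linarith

lemma aux_grad_ineq {E : Type*} [NormedAddCommGroup E] [InnerProductSpace ℝ E]
    [CompleteSpace E] {C : Set E} {φ : E → ℝ} {g z u : E} (hconv : ConvexOn ℝ C φ)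
    (hz : z ∈ C) (hu : u ∈ C) (hφ : HasGradientAt φ g z) :
    ⟪g, u - z⟫ ≤ φ u - φ z := by
  refine aux_deriv_le (aux_line_hasDerivAt hφ (u - z)) (fun t ht => ?_)
  have hcomb : z + t • (u - z) = (1 - t) • z + t • u := by module
  have h2 := hconv.2 hz hu (by linarith [ht.1, ht.2] : (0:ℝ) ≤ 1 - t) (le_of_lt ht.1)
    (by ring : (1 - t) + t = 1)
  rw [hcomb]
  simp only [zero_smul, add_zero]
  simp only [smul_eq_mul] at h2
  nlinarith [h2]

/-- NoLips / Bregman proximal gradient under relative smoothness: if `L·h − f` is convex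
(i.e. `f(u) ≤ f(x) + ⟪∇f(x), u−x⟫ + L·D_h(u,x)`), `ν ∈ [0,1]` is a lower bound for the
symmetry coefficient of `h` (`ν·D_h(u,x) ≤ D_h(x,u)`), and the method is run with step
`γ = (1+ν)/(2L)`, then for every `u ∈ dom h` and `N ≥ 1`,
`Ψ(x^N) − Ψ(u) ≤ 2L·D_h(u, x⁰)/(N(1+ν))` where `Ψ = f + r`. -/
theorem nolips_sublinear_rate
    {n : ℕ} (S : Set (EuclideanSpace ℝ (Fin n))) (hS : S.Nonempty) (hSconv : Convex ℝ S)
    (f r : EuclideanSpace ℝ (Fin n) → ℝ)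
    (f' : EuclideanSpace ℝ (Fin n) → EuclideanSpace ℝ (Fin n))
    (hfconv : ConvexOn ℝ Set.univ f)
    (hfgrad : ∀ x ∈ interior S, HasGradientAt f (f' x) x)
    (hrconv : ConvexOn ℝ Set.univ r) (hrlsc : LowerSemicontinuous r)
    (h : EuclideanSpace ℝ (Fin n) → ℝ)
    (h' : EuclideanSpace ℝ (Fin n) → EuclideanSpace ℝ (Fin n))
    (hhconv : ConvexOn ℝ S h)
    (hhgrad : ∀ x ∈ interior S, HasGradientAt h (h' x) x)
    (D : EuclideanSpace ℝ (Fin n) → EuclideanSpace ℝ (Fin n) → ℝ)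
    (hD : ∀ u x, D u x = h u - h x - ⟪h' x, u - x⟫)
    (L : ℝ) (hL : 0 < L)
    (hrel : ∀ x ∈ interior S, ∀ u ∈ interior S,
      f u ≤ f x + ⟪f' x, u - x⟫ + L * D u x)
    (ν : ℝ) (hν : ν ∈ Set.Icc (0:ℝ) 1)
    (hsym : ∀ x ∈ interior S, ∀ u ∈ interior S, x ≠ u → ν * D u x ≤ D x u)
    (γ : ℝ) (hγ : γ = (1 + ν) / (2 * L))
    (x : ℕ → EuclideanSpace ℝ (Fin n)) (hx0 : x 0 ∈ interior S)
    (hiter : ∀ k, x (k + 1) ∈ interior S ∧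
      IsMinOn (fun u => γ * ⟪f' (x k), u⟫ + γ * r u + D u (x k)) S (x (k + 1))) :
    ∀ u ∈ S, ∀ N : ℕ, 1 ≤ N →
      (f (x N) + r (x N)) - (f u + r u) ≤ 2 * L * D u (x 0) / (N * (1 + ν)) := by
  obtain ⟨hν0, hν1⟩ := hν
  have hν1' : (0:ℝ) < 1 + ν := by linarith
  have hγpos : 0 < γ := by rw [hγ]; positivity
  have hβ : 0 < 1/γ := by positivity
  have hLγ : L ≤ 1/γ := by
    rw [hγ, one_div_div, le_div_iff₀ hν1']
    nlinarith
  have hxint : ∀ k, x k ∈ interior S := by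
    intro k
    cases k with
    | zero => exact hx0
    | succ k => exact (hiter k).1
  have hxS : ∀ k, x k ∈ S := fun k => interior_subset (hxint k)
  have hDnn : ∀ k, ∀ w ∈ S, 0 ≤ D w (x k) := by
    intro k w hw
    rw [hD]
    have := aux_grad_ineq hhconv (hxS k) hw (hhgrad _ (hxint k))
    linarith
  have hfgi : ∀ k w, f (x k) + ⟪f' (x k), w - x k⟫ ≤ f w := by
    intro k w
    have := aux_grad_ineq (u := w) hfconv (Set.mem_univ _) (Set.mem_univ _) (hfgrad _ (hxint k))
    linarith
  -- three-point inequality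
  have h3p : ∀ k, ∀ w ∈ S,
      γ * ⟪f' (x k), x (k+1) - w⟫ + γ * (r (x (k+1)) - r w)
        ≤ D w (x k) - D w (x (k+1)) - D (x (k+1)) (x k) := by
    intro k w hw
    have hzint := (hiter k).1
    have hmin := (hiter k).2
    have key : ⟪h' (x k), w - x (k+1)⟫ - γ * ⟪f' (x k), w - x (k+1)⟫
        - γ * (r w - r (x (k+1))) ≤ ⟪h' (x (k+1)), w - x (k+1)⟫ := by
      apply aux_deriv_ge (aux_line_hasDerivAt (hhgrad _ hzint) (w - x (k+1)))
      intro t ht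
      have hcb : x (k+1) + t • (w - x (k+1)) = (1-t) • x (k+1) + t • w := by module
      have hmemb : x (k+1) + t • (w - x (k+1)) ∈ S := by
        rw [hcb]
        exact hSconv (hxS (k+1)) hw (by linarith [ht.1, ht.2]) (le_of_lt ht.1) (by ring)
      have hmin' := isMinOn_iff.mp hmin _ hmemb
      simp only [hD] at hmin'
      have hrc : r (x (k+1) + t • (w - x (k+1))) ≤ (1-t) * r (x (k+1)) + t * r w := by
        rw [hcb]
        have := hrconv.2 (Set.mem_univ (x (k+1))) (Set.mem_univ w)
          (by linarith [ht.1, ht.2] : (0:ℝ) ≤ 1-t) (le_of_lt ht.1) (by ring)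
        simpa using this
      have e1 : ⟪f' (x k), x (k+1) + t • (w - x (k+1))⟫
          = ⟪f' (x k), x (k+1)⟫ + t * ⟪f' (x k), w - x (k+1)⟫ := by
        rw [inner_add_right, real_inner_smul_right]
      have e2 : ⟪h' (x k), (x (k+1) + t • (w - x (k+1))) - x k⟫
          = ⟪h' (x k), x (k+1) - x k⟫ + t * ⟪h' (x k), w - x (k+1)⟫ := by
        rw [show (x (k+1) + t • (w - x (k+1))) - x k
            = (x (k+1) - x k) + t • (w - x (k+1)) by abel,
          inner_add_right, real_inner_smul_right]
      rw [e1, e2] at hmin'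
      simp only [zero_smul, add_zero]
      have hγr := mul_le_mul_of_nonneg_left hrc hγpos.le
      nlinarith [hmin', hγr]
    have hid : D w (x k) - D w (x (k+1)) - D (x (k+1)) (x k)
        = ⟪h' (x (k+1)), w - x (k+1)⟫ - ⟪h' (x k), w - x (k+1)⟫ := by
      simp only [hD, inner_sub_right]
      ring
    rw [hid]
    simp only [inner_sub_right] at key ⊢
    nlinarith [key]
  -- per-step inequality
  have hstep : ∀ k, ∀ w ∈ S, f (x (k+1)) + r (x (k+1))
      ≤ f w + r w + (1/γ) * (D w (x k) - D w (x (k+1))) := by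
    intro k w hw
    have h1 := hrel (x k) (hxint k) (x (k+1)) (hxint (k+1))
    have h2 := h3p k w hw
    have h3 := hfgi k w
    have h4 : 0 ≤ D (x (k+1)) (x k) := hDnn k _ (hxS (k+1))
    have h2' : ⟪f' (x k), x (k+1) - w⟫ + (r (x (k+1)) - r w)
        ≤ (1/γ) * (D w (x k) - D w (x (k+1)) - D (x (k+1)) (x k)) := by
      have hm := mul_le_mul_of_nonneg_left h2 hβ.le
      have heq : (1/γ) * (γ * ⟪f' (x k), x (k+1) - w⟫ + γ * (r (x (k+1)) - r w))
          = ⟪f' (x k), x (k+1) - w⟫ + (r (x (k+1)) - r w) := by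
        field_simp
      rw [heq] at hm
      exact hm
    have hex : ⟪f' (x k), x (k+1) - x k⟫
        = ⟪f' (x k), x (k+1) - w⟫ + ⟪f' (x k), w - x k⟫ := by
      rw [← inner_add_right]
      congr 1
      abel
    have h5 : L * D (x (k+1)) (x k) ≤ (1/γ) * D (x (k+1)) (x k) :=
      mul_le_mul_of_nonneg_right hLγ h4
    nlinarith [h1, h2', h3, h5, hex]
  -- monotone decrease
  have hmono : ∀ k, f (x (k+1)) + r (x (k+1)) ≤ f (x k) + r (x k) := by
    intro k
    have hs := hstep k (x k) (hxS k)
    have hzz : D (x k) (x k) = 0 := by rw [hD]; simp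
    have h4 : 0 ≤ D (x k) (x (k+1)) := hDnn (k+1) _ (hxS k)
    rw [hzz] at hs
    nlinarith [hs, mul_nonneg hβ.le h4]
  -- telescoping
  have htel : ∀ w ∈ S, ∀ N : ℕ, (N:ℝ) * (f (x N) + r (x N))
      ≤ (N:ℝ) * (f w + r w) + (1/γ) * (D w (x 0) - D w (x N)) := by
    intro w hw N
    induction N with
    | zero => simp
    | succ N ih =>
      have hs := hstep N w hw
      have hmN := hmono N
      have hN0 : (0:ℝ) ≤ N := Nat.cast_nonneg N
      push_cast
      nlinarith [ih, hs, hmN, mul_le_mul_of_nonneg_left hmN hN0]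
  intro u huS N hN
  have ht := htel u huS N
  have hDN : 0 ≤ D u (x N) := hDnn N u huS
  have hNpos : (0:ℝ) < N := by exact_mod_cast Nat.lt_of_lt_of_le Nat.zero_lt_one hN
  have step1 : (N:ℝ) * ((f (x N) + r (x N)) - (f u + r u)) ≤ (1/γ) * D u (x 0) := by
    nlinarith [ht, mul_nonneg hβ.le hDN]
  have step2 : (f (x N) + r (x N)) - (f u + r u) ≤ (1/γ) * D u (x 0) / N := by
    rw [le_div_iff₀ hNpos]
    nlinarith [step1]
  have heq : (1/γ) * D u (x 0) / N = 2 * L * D u (x 0) / (N * (1 + ν)) := by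
    rw [hγ, one_div_div, div_mul_eq_mul_div, div_div, mul_comm (1+ν) (N:ℝ)]
  linarith [step2, heq.le, heq.ge]
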